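/- Let p be an odd prime, n even, and f : V → F_p a weakly regular bent function on an n-dimensional F_p-vector space V satisfying c·f*(c^{-1}x) = ((c+1)f*(x) + (c−1)f*(−x))/2 for all c ∈ F_p^* and x ∈ V. Then setting g(x) = (f*(x)+f*(−x))/2 and h(x) = (f*(x)−f*(−x))/2, for every permutation B of F_p the function B ∘ f is weakly regular bent with W_{B∘f}(−a) = ε_f p^{n/2} ζ_p^{B(g(−a)) + h(−a)} for all a ∈ V. Consequently, the preimage partition {f^{-1}(i) : i ∈ F_p} is a bent partition of V. -/

import Mathlib

open Finset Polynomial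

private lemma zmod_sum_val {p : ℕ} [NeZero p] (F : ℕ → ℂ) :
    ∑ j : ZMod p, F j.val = ∑ i ∈ Finset.range p, F i := by
  refine Finset.sum_nbij' (fun j => j.val) (fun i => (i : ZMod p)) ?_ ?_ ?_ ?_ ?_
  · intro j _; simpa using j.val_lt
  · intro i _; exact Finset.mem_univ _
  · intro j _; exact ZMod.natCast_rightInverse j
  · intro i hi; exact ZMod.val_cast_of_lt (Finset.mem_range.mp hi)
  · intro j _; rfl

private lemma const_coeffs {p : ℕ} [hp : Fact p.Prime] {ζ : ℂ}
    (hζ : IsPrimitiveRoot ζ p) (a : ZMod p → ℤ)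
    (h : ∑ j : ZMod p, (a j : ℂ) * ζ ^ j.val = 0) :
    ∀ j : ZMod p, a j = a (((p - 1 : ℕ) : ZMod p)) := by
  have hp1 : 1 < p := hp.out.one_lt
  set c : ZMod p := ((p - 1 : ℕ) : ZMod p) with hc
  have hgeom : ∑ i ∈ Finset.range p, ζ ^ i = 0 := hζ.geom_sum_eq_zero hp1
  have h' : ∑ i ∈ Finset.range p, ((a (i : ZMod p) : ℂ)) * ζ ^ i = 0 := by
    rw [← zmod_sum_val (fun i => (a (i : ZMod p) : ℂ) * ζ ^ i)]
    rw [← h]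
    refine Finset.sum_congr rfl fun j _ => ?_
    rw [ZMod.natCast_rightInverse j]
  -- the polynomial
  set q : Polynomial ℚ :=
    ∑ i ∈ Finset.range (p - 1), Polynomial.C ((a (i : ZMod p) - a c : ℤ) : ℚ) * Polynomial.X ^ i
    with hq
  have haq : Polynomial.aeval ζ q = 0 := by
    rw [hq, map_sum]
    have : ∀ i ∈ Finset.range (p - 1),
        Polynomial.aeval ζ (Polynomial.C ((a (i : ZMod p) - a c : ℤ) : ℚ) * Polynomial.X ^ i)
          = ((a (i : ZMod p) : ℂ) - (a c : ℂ)) * ζ ^ i := by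
      intro i _
      rw [map_mul, map_pow, Polynomial.aeval_C, Polynomial.aeval_X,
        eq_ratCast (algebraMap ℚ ℂ)]
      push_cast
      ring
    rw [Finset.sum_congr rfl this]
    have hsplit : ∑ i ∈ Finset.range p, ((a (i : ZMod p) : ℂ) - (a c : ℂ)) * ζ ^ i = 0 := by
      have : ∑ i ∈ Finset.range p, ((a (i : ZMod p) : ℂ) - (a c : ℂ)) * ζ ^ i
          = (∑ i ∈ Finset.range p, ((a (i : ZMod p) : ℂ)) * ζ ^ i)
            - (a c : ℂ) * ∑ i ∈ Finset.range p, ζ ^ i := by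
        rw [Finset.mul_sum, ← Finset.sum_sub_distrib]
        exact Finset.sum_congr rfl fun i _ => by ring
      rw [this, h', hgeom, mul_zero, sub_zero]
    have hlast : ((a (((p-1 : ℕ) : ZMod p)) : ℂ) - (a c : ℂ)) * ζ ^ (p - 1) = 0 := by
      rw [← hc, sub_self, zero_mul]
    have hpsucc : p - 1 + 1 = p := Nat.succ_pred_eq_of_pos hp.out.pos
    calc ∑ i ∈ Finset.range (p - 1), ((a (i : ZMod p) : ℂ) - (a c : ℂ)) * ζ ^ i
        = ∑ i ∈ Finset.range (p - 1 + 1), ((a (i : ZMod p) : ℂ) - (a c : ℂ)) * ζ ^ i := by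
          rw [Finset.sum_range_succ, hlast, add_zero]
      _ = 0 := by rw [hpsucc, hsplit]
  have hq0 : q = 0 := by
    by_contra hne
    have hdegmin := minpoly.degree_le_of_ne_zero ℚ ζ hne haq
    have hmin : minpoly ℚ ζ = Polynomial.cyclotomic p ℚ :=
      (Polynomial.cyclotomic_eq_minpoly_rat hζ hp.out.pos).symm
    have hdmin : (minpoly ℚ ζ).natDegree = p - 1 := by
      rw [hmin, Polynomial.natDegree_cyclotomic, Nat.totient_prime hp.out]
    have hqdeg : q.degree < ((p - 1 : ℕ) : WithBot ℕ) := by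
      rw [hq]
      refine lt_of_le_of_lt (Polynomial.degree_sum_le _ _) ?_
      rw [Finset.sup_lt_iff (by exact WithBot.bot_lt_coe _)]
      intro i hi
      refine lt_of_le_of_lt (Polynomial.degree_C_mul_X_pow_le _ _) ?_
      exact_mod_cast Finset.mem_range.mp hi
    have : (minpoly ℚ ζ).degree ≤ q.degree := hdegmin
    have h2 : (minpoly ℚ ζ).degree = ((p - 1 : ℕ) : WithBot ℕ) := by
      have hne0 : minpoly ℚ ζ ≠ 0 := by
        rw [hmin]; exact (Polynomial.cyclotomic.monic p ℚ).ne_zero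
      rw [Polynomial.degree_eq_natDegree hne0, hdmin]
    rw [h2] at this
    exact absurd (lt_of_le_of_lt this hqdeg) (lt_irrefl _)
  -- coefficients vanish
  have hcoeff : ∀ i, i < p - 1 → ((a (i : ZMod p) - a c : ℤ) : ℚ) = 0 := by
    intro i hi
    have : q.coeff i = ((a (i : ZMod p) - a c : ℤ) : ℚ) := by
      rw [hq, Polynomial.finset_sum_coeff]
      rw [Finset.sum_eq_single i]
      · simp only [Polynomial.coeff_C_mul, Polynomial.coeff_X_pow]
        norm_num
      · intro b _ hb
        simp only [Polynomial.coeff_C_mul, Polynomial.coeff_X_pow, if_neg (Ne.symm hb), mul_zero]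
      · intro hmem
        exact absurd (Finset.mem_range.mpr hi) hmem
    rw [hq0] at this
    simpa using this.symm
  intro j
  rcases lt_or_eq_of_le (Nat.lt_succ_iff.mp (by
      have := j.val_lt
      omega : j.val < p - 1 + 1)) with hlt | heq
  · have := hcoeff j.val hlt
    have h2 : (a ((j.val : ℕ) : ZMod p) : ℚ) = (a c : ℚ) := by
      push_cast at this
      linarith
    rw [ZMod.natCast_rightInverse j] at h2
    exact_mod_cast h2
  · rw [← ZMod.natCast_rightInverse j, heq]

/-- Let `p` be an odd prime, `n` even, and `f : V → F_p` weakly regular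
bent (`W_f(a) = ε p^{n/2} ζ_p^{f*(a)}`, `ε ∈ {±1}`) with
`c·f*(c⁻¹x) = ((c+1)f*(x) + (c−1)f*(−x))/2` for all `c ∈ F_p^*`. Setting
`g(x) = (f*(x)+f*(−x))/2` and `h(x) = (f*(x)−f*(−x))/2`, for every permutation `B` of
`F_p` the function `B ∘ f` is weakly regular bent with
`W_{B∘f}(−a) = ε p^{n/2} ζ_p^{B(g(−a)) + h(−a)}`; consequently the preimage partition
`{f⁻¹(i)}` is a bent partition (every `B ∘ f` is bent). -/
theorem stmt17 (p n : ℕ) [Fact p.Prime] [NeZero p] (hodd : Odd p) (hn : Even n)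
    (hpos : 0 < n)
    (V : Type*) [AddCommGroup V] [Module (ZMod p) V] [Fintype V]
    (hcard : Fintype.card V = p ^ n)
    (φ : V →ₗ[ZMod p] V →ₗ[ZMod p] ZMod p)
    (hnd : ∀ v : V, (∀ w : V, φ v w = 0) → v = 0)
    (f fstar : V → ZMod p) (ε : ℂ) (hε : ε = 1 ∨ ε = -1)
    (hW : ∀ a : V,
      ∑ x : V, Complex.exp (2 * Real.pi * Complex.I / p) ^ ((f x - φ a x).val) =
        ε * (p : ℂ) ^ (n / 2) *
          Complex.exp (2 * Real.pi * Complex.I / p) ^ ((fstar a).val))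
    (hcond : ∀ c : (ZMod p)ˣ, ∀ x : V,
      (c : ZMod p) * fstar (((c : ZMod p)⁻¹) • x) =
        (((c : ZMod p) + 1) * fstar x + ((c : ZMod p) - 1) * fstar (-x)) / 2) :
    (∀ B : Equiv.Perm (ZMod p), ∀ a : V,
      ∑ x : V, Complex.exp (2 * Real.pi * Complex.I / p) ^ ((B (f x) - φ (-a) x).val) =
        ε * (p : ℂ) ^ (n / 2) *
          Complex.exp (2 * Real.pi * Complex.I / p) ^
            ((B ((fstar (-a) + fstar a) / 2) + (fstar (-a) - fstar a) / 2).val)) ∧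
    (∀ B : Equiv.Perm (ZMod p), ∀ a : V,
      ‖∑ x : V,
        Complex.exp (2 * Real.pi * Complex.I / p) ^ ((B (f x) - φ a x).val)‖ =
        (p : ℝ) ^ (n / 2)) := by
  classical
  have hp : p.Prime := Fact.out
  have hp1 : 1 < p := hp.one_lt
  set ζ : ℂ := Complex.exp (2 * Real.pi * Complex.I / p) with hζdef
  have hζ : IsPrimitiveRoot ζ p := Complex.isPrimitiveRoot_exp p (NeZero.ne p)
  set e : ZMod p → ℂ := fun j => ζ ^ j.val with he
  set P : ℂ := (p : ℂ) ^ (n / 2) with hP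
  -- basic facts about e
  have hcastpow : ∀ m : ℕ, ζ ^ ((m : ZMod p)).val = ζ ^ m := by
    intro m
    rw [ZMod.val_natCast]
    conv_rhs => rw [← Nat.div_add_mod m p]
    rw [pow_add, pow_mul, hζ.pow_eq_one, one_pow, one_mul]
  have headd : ∀ j k : ZMod p, e (j + k) = e j * e k := by
    intro j k
    have h1 : j + k = ((j.val + k.val : ℕ) : ZMod p) := by
      rw [Nat.cast_add, ZMod.natCast_rightInverse j, ZMod.natCast_rightInverse k]
    rw [he]
    simp only
    rw [h1, hcastpow, pow_add]
  have he0 : e 0 = 1 := by rw [he]; simp [ZMod.val_zero]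
  have hene : ∀ d : ZMod p, d ≠ 0 → e d ≠ 1 := by
    intro d hd
    exact hζ.pow_ne_one_of_pos_of_lt (ZMod.val_pos.mpr hd).ne' d.val_lt
  have hsum : ∑ j : ZMod p, e j = 0 := by
    rw [he]
    simp only
    rw [zmod_sum_val (fun i => ζ ^ i)]
    exact hζ.geom_sum_eq_zero hp1
  have hcsum : ∀ d : ZMod p, d ≠ 0 → ∑ c : ZMod p, e (c * d) = 0 := by
    intro d hd
    rw [← hsum]
    exact Fintype.sum_equiv (Equiv.mulRight₀ d hd) _ _ (fun c => rfl)
  have horth : ∀ d : ZMod p, ∑ c : ZMod p, e (c * d) = if d = 0 then (p : ℂ) else 0 := by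
    intro d
    by_cases hd : d = 0
    · subst hd
      simp [he0, ZMod.card]
    · rw [if_neg hd]; exact hcsum d hd
  have hVsum : ∀ b : V, b ≠ 0 → ∑ x : V, e (φ b x) = 0 := by
    intro b hb
    obtain ⟨v, hv⟩ : ∃ v, φ b v ≠ 0 := by
      by_contra hcon
      push_neg at hcon
      exact hb (hnd b hcon)
    have hS : (∑ x : V, e (φ b x)) * (e (φ b v) - 1) = 0 := by
      have h1 : ∑ x : V, e (φ b x) = ∑ x : V, e (φ b (x + v)) :=
        Fintype.sum_equiv (Equiv.addRight v).symm _ _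
          (fun x => by rw [show (Equiv.addRight v).symm x + v = x by simp])
      have h2 : ∑ x : V, e (φ b (x + v)) = (∑ x : V, e (φ b x)) * e (φ b v) := by
        rw [Finset.sum_mul]
        exact Finset.sum_congr rfl fun x _ => by rw [map_add, headd]
      rw [mul_sub, mul_one, ← h2, ← h1, sub_self]
    rcases mul_eq_zero.mp hS with h | h
    · exact h
    · exact absurd (sub_eq_zero.mp h) (hene _ hv)
  obtain ⟨εI, hεI⟩ : ∃ m : ℤ, (m : ℂ) = ε := by
    rcases hε with h | h
    · exact ⟨1, by simp [h]⟩
    · exact ⟨-1, by simp [h]⟩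
  have hGal : ∀ (b : V) (c : ZMod p), c ≠ 0 →
      ∑ x : V, e (c * (f x - φ b x)) = ε * P * e (c * fstar b) := by
    intro b c hc
    set M : ZMod p → ℕ := fun j => (Finset.univ.filter (fun x : V => f x - φ b x = j)).card with hM
    have hfib : ∀ u : ZMod p,
        ∑ x : V, e (u * (f x - φ b x)) = ∑ j : ZMod p, (M j : ℂ) * e (u * j) := by
      intro u
      rw [← Finset.sum_fiberwise' Finset.univ (fun x : V => f x - φ b x) (fun j => e (u * j))]
      refine Finset.sum_congr rfl fun j _ => ?_
      rw [Finset.sum_const, hM, nsmul_eq_mul]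
    have h1 : ∑ j : ZMod p, (M j : ℂ) * e j = ε * P * e (fstar b) := by
      have hWb := hW b
      have h2 := hfib 1
      simp only [one_mul] at h2
      rw [← h2]
      exact hWb
    set aI : ZMod p → ℤ :=
      fun j => (M j : ℤ) - εI * (p : ℤ) ^ (n / 2) * (if j = fstar b then 1 else 0) with haI
    have hzero : ∑ j : ZMod p, ((aI j : ℂ)) * e j = 0 := by
      have hexp : ∀ j : ZMod p, ((aI j : ℂ)) * e j
          = (M j : ℂ) * e j - (if j = fstar b then ε * P * e j else 0) := by
        intro j
        rw [haI]
        by_cases hj : j = fstar b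
        · simp only [hj, if_pos rfl]
          rw [← hεI, hP]
          push_cast
          ring
        · simp only [if_neg hj]
          push_cast
          ring
      rw [Finset.sum_congr rfl fun j _ => hexp j, Finset.sum_sub_distrib, h1,
        Finset.sum_ite_eq' Finset.univ (fstar b) (fun j => ε * P * e j)]
      simp
    have hall := const_coeffs hζ aI hzero
    set t : ℤ := aI (((p - 1 : ℕ) : ZMod p)) with ht
    have hMj : ∀ j : ZMod p, (M j : ℂ) = (t : ℂ) + (if j = fstar b then ε * P else 0) := by
      intro j
      have h2 : (M j : ℤ) = t + εI * (p : ℤ) ^ (n / 2) * (if j = fstar b then 1 else 0) := by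
        rw [← hall j, haI]; ring
      have h3 := congrArg (Int.cast : ℤ → ℂ) h2
      push_cast at h3
      rw [h3]
      by_cases hj : j = fstar b
      · rw [if_pos hj, if_pos hj, ← hεI, hP]; push_cast; ring
      · rw [if_neg hj, if_neg hj]; push_cast; ring
    have hjs : ∑ j : ZMod p, e (c * j) = 0 := by
      rw [← hcsum c hc]
      exact Finset.sum_congr rfl fun j _ => by rw [mul_comm]
    rw [hfib c]
    calc ∑ j : ZMod p, (M j : ℂ) * e (c * j)
        = ∑ j : ZMod p,
            ((t : ℂ) * e (c * j) + (if j = fstar b then ε * P * e (c * j) else 0)) := by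
          refine Finset.sum_congr rfl fun j _ => ?_
          rw [hMj j]
          by_cases hj : j = fstar b
          · rw [if_pos hj, if_pos hj]; ring
          · rw [if_neg hj, if_neg hj]; ring
      _ = (t : ℂ) * (∑ j : ZMod p, e (c * j))
            + ∑ j : ZMod p, (if j = fstar b then ε * P * e (c * j) else 0) := by
          rw [Finset.sum_add_distrib, Finset.mul_sum]
      _ = ε * P * e (c * fstar b) := by
          rw [hjs, Finset.sum_ite_eq' Finset.univ (fstar b) (fun j => ε * P * e (c * j))]
          simp
  have hpne : (p : ℂ) ≠ 0 := Nat.cast_ne_zero.mpr hp.ne_zero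
  have main1 : ∀ (B : Equiv.Perm (ZMod p)) (a : V),
      ∑ x : V, e (B (f x) - φ (-a) x)
        = ε * P * e (B ((fstar (-a) + fstar a) / 2) + (fstar (-a) - fstar a) / 2) := by
    intro B a
    set g' : ZMod p := (fstar (-a) + fstar a) / 2 with hg'
    set h' : ZMod p := (fstar (-a) - fstar a) / 2 with hh'
    have hBsum : ∑ j : ZMod p, e (B j) = 0 := by
      rw [← hsum]
      exact Fintype.sum_equiv B (fun j => e (B j)) e (fun j => rfl)
    have hWc : ∀ c : ZMod p, c ≠ 0 →
        ∑ x : V, e (c * f x - φ (-a) x) = ε * P * e (c * g' + h') := by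
      intro c hc
      have hinv : ∀ x : V, c * f x - φ (-a) x = c * (f x - φ (c⁻¹ • (-a)) x) := by
        intro x
        rw [map_smul, LinearMap.smul_apply, smul_eq_mul, mul_sub, ← mul_assoc,
          mul_inv_cancel₀ hc, one_mul]
      have hstep : ∑ x : V, e (c * f x - φ (-a) x)
          = ∑ x : V, e (c * (f x - φ (c⁻¹ • (-a)) x)) :=
        Finset.sum_congr rfl fun x _ => by rw [hinv x]
      rw [hstep, hGal (c⁻¹ • (-a)) c hc]
      congr 1
      have hc2 := hcond (Units.mk0 c hc) (-a)
      simp only [Units.val_mk0] at hc2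
      rw [hc2, neg_neg, hg', hh']
      ring
    have step1 : ∀ x : V, (p : ℂ) * e (B (f x) - φ (-a) x)
        = ∑ j : ZMod p, ∑ c : ZMod p, e (c * f x - φ (-a) x) * e (B j - c * j) := by
      intro x
      have hterm : ∀ j c : ZMod p,
          e (c * f x - φ (-a) x) * e (B j - c * j)
            = e (c * (f x - j)) * e (B j - φ (-a) x) := by
        intro j c
        have h1 : (c * f x - φ (-a) x) + (B j - c * j)
            = (c * (f x - j)) + (B j - φ (-a) x) := by ring
        calc e (c * f x - φ (-a) x) * e (B j - c * j)
            = e ((c * f x - φ (-a) x) + (B j - c * j)) := (headd _ _).symm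
          _ = e ((c * (f x - j)) + (B j - φ (-a) x)) := by rw [h1]
          _ = _ := headd _ _
      calc (p : ℂ) * e (B (f x) - φ (-a) x)
          = ∑ j : ZMod p,
              (if j = f x then (p : ℂ) * e (B j - φ (-a) x) else 0) := by
            rw [Finset.sum_ite_eq' Finset.univ (f x)
              (fun j => (p : ℂ) * e (B j - φ (-a) x))]
            simp
        _ = ∑ j : ZMod p, (if f x - j = 0 then (p : ℂ) else 0) * e (B j - φ (-a) x) := by
            refine Finset.sum_congr rfl fun j _ => ?_
            by_cases hj : j = f x
            · rw [if_pos hj, if_pos (by rw [hj, sub_self])]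
            · rw [if_neg hj, if_neg (fun hs => hj (sub_eq_zero.mp hs).symm), zero_mul]
        _ = ∑ j : ZMod p, ∑ c : ZMod p, e (c * (f x - j)) * e (B j - φ (-a) x) := by
            refine Finset.sum_congr rfl fun j _ => ?_
            rw [← Finset.sum_mul, horth]
        _ = ∑ j : ZMod p, ∑ c : ZMod p, e (c * f x - φ (-a) x) * e (B j - c * j) :=
            Finset.sum_congr rfl fun j _ => Finset.sum_congr rfl fun c _ => (hterm j c).symm
    have key : (p : ℂ) * (∑ x : V, e (B (f x) - φ (-a) x))
        = ∑ c : ZMod p,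
            (∑ x : V, e (c * f x - φ (-a) x)) * (∑ j : ZMod p, e (B j - c * j)) := by
      calc (p : ℂ) * (∑ x : V, e (B (f x) - φ (-a) x))
          = ∑ x : V, (p : ℂ) * e (B (f x) - φ (-a) x) := Finset.mul_sum _ _ _
        _ = ∑ x : V, ∑ j : ZMod p, ∑ c : ZMod p,
              e (c * f x - φ (-a) x) * e (B j - c * j) :=
            Finset.sum_congr rfl fun x _ => step1 x
        _ = ∑ j : ZMod p, ∑ x : V, ∑ c : ZMod p,
              e (c * f x - φ (-a) x) * e (B j - c * j) := Finset.sum_comm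
        _ = ∑ j : ZMod p, ∑ c : ZMod p, ∑ x : V,
              e (c * f x - φ (-a) x) * e (B j - c * j) :=
            Finset.sum_congr rfl fun j _ => Finset.sum_comm
        _ = ∑ c : ZMod p, ∑ j : ZMod p, ∑ x : V,
              e (c * f x - φ (-a) x) * e (B j - c * j) := Finset.sum_comm
        _ = ∑ c : ZMod p,
            (∑ x : V, e (c * f x - φ (-a) x)) * (∑ j : ZMod p, e (B j - c * j)) := by
            refine Finset.sum_congr rfl fun c _ => ?_
            rw [Finset.mul_sum]
            refine Finset.sum_congr rfl fun j _ => ?_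
            rw [Finset.sum_mul]
    -- split off c = 0
    have hsplit0 : ∑ c : ZMod p,
        (∑ x : V, e (c * f x - φ (-a) x)) * (∑ j : ZMod p, e (B j - c * j))
        = ∑ c ∈ Finset.univ \ {(0 : ZMod p)},
            (∑ x : V, e (c * f x - φ (-a) x)) * (∑ j : ZMod p, e (B j - c * j)) := by
      rw [Finset.sum_eq_sum_sdiff_singleton_add (Finset.mem_univ (0 : ZMod p))]
      have hz : (∑ j : ZMod p, e (B j - 0 * j)) = 0 := by
        rw [← hBsum]
        refine Finset.sum_congr rfl fun j _ => ?_
        rw [zero_mul, sub_zero]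
      rw [hz, mul_zero, add_zero]
    have hcterm : ∀ c ∈ Finset.univ \ {(0 : ZMod p)},
        (∑ x : V, e (c * f x - φ (-a) x)) * (∑ j : ZMod p, e (B j - c * j))
          = ε * P * ∑ j : ZMod p, e (B j + h') * e (c * (g' - j)) := by
      intro c hcmem
      have hc : c ≠ 0 := by
        simpa [Finset.mem_sdiff] using hcmem
      rw [hWc c hc, Finset.mul_sum, Finset.mul_sum]
      refine Finset.sum_congr rfl fun j _ => ?_
      have h1 : (c * g' + h') + (B j - c * j) = (B j + h') + (c * (g' - j)) := by ring
      calc ε * P * e (c * g' + h') * e (B j - c * j)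
          = ε * P * (e (c * g' + h') * e (B j - c * j)) := by ring
        _ = ε * P * e ((c * g' + h') + (B j - c * j)) := by rw [← headd]
        _ = ε * P * e ((B j + h') + (c * (g' - j))) := by rw [h1]
        _ = ε * P * (e (B j + h') * e (c * (g' - j))) := by rw [headd]
    have hinner : ∑ c ∈ Finset.univ \ {(0 : ZMod p)},
        ∑ j : ZMod p, e (B j + h') * e (c * (g' - j)) = (p : ℂ) * e (B g' + h') := by
      rw [Finset.sum_comm]
      have hper : ∀ j : ZMod p,
          ∑ c ∈ Finset.univ \ {(0 : ZMod p)}, e (B j + h') * e (c * (g' - j))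
            = e (B j + h') * ((if g' - j = 0 then (p : ℂ) else 0) - 1) := by
        intro j
        rw [← Finset.mul_sum]
        congr 1
        have hfull := Finset.sum_eq_sum_sdiff_singleton_add (Finset.mem_univ (0 : ZMod p))
          (fun c => e (c * (g' - j)))
        rw [horth] at hfull
        have h0 : e ((0 : ZMod p) * (g' - j)) = 1 := by rw [zero_mul, he0]
        rw [h0] at hfull
        linear_combination -hfull
      rw [Finset.sum_congr rfl fun j _ => hper j]
      have hexpand : ∀ j : ZMod p,
          e (B j + h') * ((if g' - j = 0 then (p : ℂ) else 0) - 1)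
            = (if j = g' then e (B j + h') * (p : ℂ) else 0) - e (B j + h') := by
        intro j
        by_cases hj : j = g'
        · rw [if_pos (by rw [hj, sub_self]), if_pos hj]; ring
        · rw [if_neg (fun hs => hj (sub_eq_zero.mp hs).symm), if_neg hj]; ring
      rw [Finset.sum_congr rfl fun j _ => hexpand j, Finset.sum_sub_distrib,
        Finset.sum_ite_eq' Finset.univ g' (fun j => e (B j + h') * (p : ℂ))]
      have hsum2 : ∑ j : ZMod p, e (B j + h') = 0 := by
        have : ∀ j : ZMod p, e (B j + h') = e (B j) * e h' := fun j => headd _ _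
        rw [Finset.sum_congr rfl fun j _ => this j, ← Finset.sum_mul, hBsum, zero_mul]
      rw [hsum2, sub_zero]
      simp [mul_comm]
    have hfinal : (p : ℂ) * (∑ x : V, e (B (f x) - φ (-a) x))
        = (p : ℂ) * (ε * P * e (B g' + h')) := by
      rw [key, hsplit0, Finset.sum_congr rfl hcterm, ← Finset.mul_sum, hinner]
      ring
    exact mul_left_cancel₀ hpne hfinal
  constructor
  · exact fun B a => main1 B a
  · intro B a
    have hm := main1 B (-a)
    rw [neg_neg] at hm
    have hz1 : ‖ζ‖ = 1 := by
      have h2 : (2 * (Real.pi : ℂ) * Complex.I / p) = ((2 * Real.pi / p : ℝ) : ℂ) * Complex.I := by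
        push_cast
        ring
      rw [hζdef, h2, Complex.norm_exp_ofReal_mul_I]
    have habse : ∀ k : ZMod p, ‖e k‖ = 1 := by
      intro k
      rw [he]
      simp [map_pow, hz1]
    have habsP : ‖P‖ = (p : ℝ) ^ (n / 2) := by
      rw [hP, norm_pow, Complex.norm_natCast]
    have habsε : ‖ε‖ = 1 := by
      rcases hε with h | h <;> rw [h] <;> simp
    show ‖∑ x : V, e (B (f x) - φ a x)‖ = (p : ℝ) ^ (n / 2)
    rw [hm, norm_mul, norm_mul, habsε, habsP, habse, one_mul, mul_one]
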